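/- If R is right small injective and right Kasch, then rl(I) = I for every small right ideal I of R. -/

import Mathlib

/-- A right ideal `I` of `R` (viewed as a submodule of `R` over `Rᵐᵒᵖ`) is small if
`I + K ≠ R` for every proper right ideal `K`. -/
def IsSmallRightIdeal {R : Type*} [Ring R] (I : Submodule Rᵐᵒᵖ R) : Prop :=
  ∀ K : Submodule Rᵐᵒᵖ R, I ⊔ K = ⊤ → K = ⊤

/-- A right `R`-module `M` is small injective if every `R`-homomorphism from a small right
ideal of `R` to `M` extends to a homomorphism `R → M`. -/
def SmallInjective (R : Type*) [Ring R] (M : Type*) [AddCommGroup M] [Module Rᵐᵒᵖ M] : Prop :=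
  ∀ I : Submodule Rᵐᵒᵖ R, IsSmallRightIdeal I → ∀ f : I →ₗ[Rᵐᵒᵖ] M,
    ∃ g : R →ₗ[Rᵐᵒᵖ] M, ∀ x : I, g x = f x


/-- The left annihilator `l(X) = {r : r * x = 0 ∀ x ∈ X}` of a subset `X ⊆ R`,
as a left ideal of `R`. -/
def leftAnn (R : Type*) [Ring R] (X : Set R) : Submodule R R where
  carrier := {r | ∀ x ∈ X, r * x = 0}
  add_mem' := by
    intro a b ha hb x hx
    rw [add_mul, ha x hx, hb x hx, add_zero]
  zero_mem' := by intro x hx; rw [zero_mul]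
  smul_mem' := by
    intro c a ha x hx
    show c * a * x = 0
    rw [mul_assoc, ha x hx, mul_zero]

/-- The right annihilator `r(X) = {r : x * r = 0 ∀ x ∈ X}` of a subset `X ⊆ R`,
as a right ideal of `R`. -/
def rightAnn (R : Type*) [Ring R] (X : Set R) : Submodule Rᵐᵒᵖ R where
  carrier := {r | ∀ x ∈ X, x * r = 0}
  add_mem' := by
    intro a b ha hb x hx
    rw [mul_add, ha x hx, hb x hx, add_zero]
  zero_mem' := by intro x hx; rw [mul_zero]
  smul_mem' := by
    intro c a ha x hx
    show x * (a * c.unop) = 0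
    rw [← mul_assoc, ha x hx, zero_mul]

/-- `R` is right Kasch if every simple right `R`-module embeds in `R` as a right module. -/
def RightKasch (R : Type u) [Ring R] : Prop :=
  ∀ (M : Type u) [AddCommGroup M] [Module Rᵐᵒᵖ M], IsSimpleModule Rᵐᵒᵖ M →
    ∃ f : M →ₗ[Rᵐᵒᵖ] R, Function.Injective f

-- === auxiliary lemmas ===

/-- Auxiliary: a right ideal containing `1` is everything. -/
lemma myEqTop {R : Type*} [Ring R] {P : Submodule Rᵐᵒᵖ R} (h1 : (1:R) ∈ P) : P = ⊤ := by
  rw [Submodule.eq_top_iff']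
  intro x
  simpa [MulOpposite.smul_eq_mul_unop] using P.smul_mem (MulOpposite.op x) h1

/-- Auxiliary: every proper right ideal is contained in a coatom. -/
lemma myExistsCoatom {R : Type*} [Ring R] (T : Submodule Rᵐᵒᵖ R) (hT : T ≠ ⊤) :
    ∃ M : Submodule Rᵐᵒᵖ R, IsCoatom M ∧ T ≤ M := by
  have h1T : (1:R) ∉ T := fun h => hT (myEqTop h)
  obtain ⟨M, hTM, hM⟩ := zorn_le_nonempty₀ {P : Submodule Rᵐᵒᵖ R | (1:R) ∉ P}
    (fun c hcs hchain y hy => by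
      refine ⟨sSup c, ?_, fun z hz => le_sSup hz⟩
      intro h1
      obtain ⟨p, hpc, hp1⟩ := (Submodule.mem_sSup_of_directed ⟨y, hy⟩ hchain.directedOn).1 h1
      exact hcs hpc hp1) T h1T
  refine ⟨M, ⟨fun htop => hM.1 (htop ▸ Submodule.mem_top), fun b hb => ?_⟩, hTM⟩
  by_contra hbtop
  have : (1:R) ∉ b := fun h => hbtop (myEqTop h)
  exact absurd (hM.2 this hb.le) (not_le_of_gt hb)

/-- Left multiplication by a fixed element, as an `Rᵐᵒᵖ`-linear map `R → R`. -/
def mulLeftOp {R : Type*} [Ring R] (a : R) : R →ₗ[Rᵐᵒᵖ] R where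
  toFun t := a * t
  map_add' := mul_add a
  map_smul' c x := by
    simp only [RingHom.id_apply, MulOpposite.smul_eq_mul_unop, mul_assoc]

@[simp] lemma mulLeftOp_apply {R : Type*} [Ring R] (a t : R) : mulLeftOp a t = a * t := rfl

/-- In a right Kasch ring, every coatom of the lattice of right ideals is the right
annihilator of some element. -/
lemma myKaschCoatom {R : Type u} [Ring R] (hk : RightKasch R) {M : Submodule Rᵐᵒᵖ R}
    (hM : IsCoatom M) : ∃ c : R, ∀ x : R, c * x = 0 ↔ x ∈ M := by
  have hsimple : IsSimpleModule Rᵐᵒᵖ (R ⧸ M) := isSimpleModule_iff_isCoatom.mpr hM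
  obtain ⟨σ, hσ⟩ := hk (R ⧸ M) hsimple
  refine ⟨σ (Submodule.Quotient.mk 1), fun x => ?_⟩
  have hx : σ (Submodule.Quotient.mk x) = σ (Submodule.Quotient.mk 1) * x := by
    have h1 : (Submodule.Quotient.mk x : R ⧸ M) =
        MulOpposite.op x • (Submodule.Quotient.mk 1 : R ⧸ M) := by
      rw [← Submodule.Quotient.mk_smul]
      simp [MulOpposite.smul_eq_mul_unop]
    rw [h1, map_smul, MulOpposite.smul_eq_mul_unop, MulOpposite.unop_op]
  constructor
  · intro h0
    have h2 : σ (Submodule.Quotient.mk x) = σ 0 := by rw [hx, h0, map_zero]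
    have h3 := hσ h2
    rwa [Submodule.Quotient.mk_eq_zero] at h3
  · intro hxM
    rw [← hx, (Submodule.Quotient.mk_eq_zero M).mpr hxM, map_zero]

theorem stmt_10 {R : Type u} [Ring R] (h : SmallInjective R R) (hk : RightKasch R)
    (I : Submodule Rᵐᵒᵖ R) (hI : IsSmallRightIdeal I) :
    rightAnn R ↑(leftAnn R ↑I) = I := by
  apply le_antisymm
  · -- hard direction: rl(I) ≤ I
    intro a ha
    by_contra haI
    -- N = I + aR
    set N : Submodule Rᵐᵒᵖ R := I ⊔ LinearMap.range (mulLeftOp a) with hNdef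
    have hαN : ∀ t : R, a * t ∈ N := fun t =>
      Submodule.mem_sup_right ⟨t, rfl⟩
    have haN : a ∈ N := by simpa using hαN 1
    -- any coatom containing I contains a
    have key : ∀ M : Submodule Rᵐᵒᵖ R, IsCoatom M → I ≤ M → a ∈ M := by
      intro M hM hIM
      obtain ⟨c, hc⟩ := myKaschCoatom hk hM
      have hcl : c ∈ leftAnn R (I : Set R) := fun k hk' => (hc k).mpr (hIM hk')
      exact (hc a).mp (ha c hcl)
    -- I is contained in every coatom (since I is small)
    have hIle : ∀ M : Submodule Rᵐᵒᵖ R, IsCoatom M → I ≤ M := by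
      intro M hM
      by_contra hnle
      have hlt : M < M ⊔ I := lt_of_le_of_ne le_sup_left
        (fun he => hnle (he ▸ le_sup_right))
      have htop : M ⊔ I = ⊤ := hM.2 _ hlt
      rw [sup_comm] at htop
      exact hM.1 (hI M htop)
    -- N is small
    have hNsmall : IsSmallRightIdeal N := by
      intro T hT
      by_contra hTtop
      obtain ⟨M, hM, hTM⟩ := myExistsCoatom T hTtop
      have haM : a ∈ M := key M hM (hIle M hM)
      have hle : N ⊔ T ≤ M := by
        apply sup_le _ hTM
        apply sup_le (hIle M hM)
        rintro x ⟨t, rfl⟩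
        exact M.smul_mem (MulOpposite.op t) haM
      rw [hT] at hle
      exact hM.1 (top_le_iff.mp hle)
    -- T = (I : a), a proper right ideal
    have hTne : I.comap (mulLeftOp a) ≠ ⊤ := by
      intro hTeq
      apply haI
      have h1 : (1:R) ∈ I.comap (mulLeftOp a) := hTeq ▸ Submodule.mem_top
      rw [Submodule.mem_comap] at h1
      simpa using h1
    obtain ⟨M, hM, hTM⟩ := myExistsCoatom _ hTne
    have h1M : (1:R) ∉ M := fun h1 => hM.1 (myEqTop h1)
    -- the quotient map machinery
    set K' : Submodule Rᵐᵒᵖ ↥N := I.comap N.subtype with hK'def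
    set α' : R →ₗ[Rᵐᵒᵖ] ↥N := (mulLeftOp a).codRestrict N hαN with hα'def
    set u : R →ₗ[Rᵐᵒᵖ] (↥N ⧸ K') := K'.mkQ.comp α' with hudef
    have humk : ∀ t : R, u t = Submodule.Quotient.mk ⟨a * t, hαN t⟩ := fun t => rfl
    have hu : Function.Surjective u := by
      intro z
      obtain ⟨⟨x, hx⟩, rfl⟩ := Submodule.mkQ_surjective K' z
      obtain ⟨i, hi, y, hy, rfl⟩ := Submodule.mem_sup.mp hx
      obtain ⟨t, rfl⟩ := hy
      refine ⟨t, ?_⟩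
      rw [humk, Submodule.mkQ_apply, Submodule.Quotient.eq]
      have hcoe : ((⟨a * t, hαN t⟩ - ⟨i + mulLeftOp a t, hx⟩ : ↥N) : R) = -i := by
        simp only [AddSubgroupClass.coe_sub, mulLeftOp_apply]
        abel
      show (⟨a * t, hαN t⟩ - ⟨i + mulLeftOp a t, hx⟩ : ↥N) ∈ K'
      rw [hK'def, Submodule.mem_comap]
      show ((⟨a * t, hαN t⟩ - ⟨i + mulLeftOp a t, hx⟩ : ↥N) : R) ∈ I
      rw [hcoe]
      exact I.neg_mem hi
    have hker : LinearMap.ker u ≤ M := by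
      intro t ht
      apply hTM
      rw [LinearMap.mem_ker, humk, Submodule.Quotient.mk_eq_zero] at ht
      rw [hK'def, Submodule.mem_comap] at ht
      exact ht
    -- build γ : N → R
    have hsimple : IsSimpleModule Rᵐᵒᵖ (R ⧸ M) := isSimpleModule_iff_isCoatom.mpr hM
    obtain ⟨σ, hσ⟩ := hk (R ⧸ M) hsimple
    set e : (R ⧸ LinearMap.ker u) ≃ₗ[Rᵐᵒᵖ] (↥N ⧸ K') := u.quotKerEquivOfSurjective hu with hedef
    set φ : (R ⧸ LinearMap.ker u) →ₗ[Rᵐᵒᵖ] (R ⧸ M) :=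
      Submodule.mapQ (LinearMap.ker u) M LinearMap.id hker with hφdef
    set γ : ↥N →ₗ[Rᵐᵒᵖ] R := σ.comp (φ.comp (e.symm.toLinearMap.comp K'.mkQ)) with hγdef
    have hγI : ∀ (k : R) (hkI : k ∈ I), γ ⟨k, Submodule.mem_sup_left hkI⟩ = 0 := by
      intro k hkI
      have hz : (Submodule.Quotient.mk (⟨k, Submodule.mem_sup_left hkI⟩ : ↥N) : ↥N ⧸ K') = 0 :=
        (Submodule.Quotient.mk_eq_zero K').mpr hkI
      rw [hγdef]
      simp only [LinearMap.comp_apply, LinearEquiv.coe_coe, Submodule.mkQ_apply]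
      rw [hz, map_zero, map_zero, map_zero]
    have hγa : γ ⟨a, haN⟩ ≠ 0 := by
      have hmk : (⟨a, haN⟩ : ↥N) = α' 1 := by
        apply Subtype.ext
        simp [hα'def]
        exact (mul_one a).symm
      have hesymm : e.symm (u 1) = Submodule.Quotient.mk 1 := by
        rw [LinearEquiv.symm_apply_eq]
        simp [hedef, LinearMap.quotKerEquivOfSurjective, LinearMap.quotKerEquivRange]
      have hcalc : γ ⟨a, haN⟩ = σ (Submodule.Quotient.mk 1) := by
        rw [hγdef]
        simp only [LinearMap.comp_apply, LinearEquiv.coe_coe, Submodule.mkQ_apply]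
        rw [hmk]
        have : (Submodule.Quotient.mk (α' 1) : ↥N ⧸ K') = u 1 := rfl
        rw [this, hesymm, hφdef, Submodule.mapQ_apply, LinearMap.id_apply]
      rw [hcalc]
      intro h0
      have : (Submodule.Quotient.mk (1:R) : R ⧸ M) = 0 := hσ (by rw [h0, map_zero])
      rw [Submodule.Quotient.mk_eq_zero] at this
      exact h1M this
    -- apply small injectivity
    obtain ⟨g, hg⟩ := h N hNsmall γ
    have hgc : ∀ x : ↥N, g ↑x = g 1 * ↑x := by
      intro x
      have hx1 : (↑x : R) = MulOpposite.op (↑x : R) • (1:R) := by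
        simp [MulOpposite.smul_eq_mul_unop]
      conv_lhs => rw [hx1]
      rw [map_smul, MulOpposite.smul_eq_mul_unop, MulOpposite.unop_op]
    have hcl : g 1 ∈ leftAnn R (I : Set R) := by
      intro k hkI
      have h1 := hg ⟨k, Submodule.mem_sup_left hkI⟩
      rw [hγI k hkI, hgc] at h1
      exact h1
    have hca : g 1 * a = 0 := ha (g 1) hcl
    apply hγa
    have h2 := hg ⟨a, haN⟩
    rw [hgc] at h2
    rw [← h2, hca]
  · -- easy direction
    intro x hx
    exact fun y hy => hy x hx
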